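/- Combinatorial matrix Hoeffding inequality: let {A_{i,j} : i,j ∈ [N]} be fixed symmetric real d×d matrices with ‖A_{i,j}‖_op ≤ M for all i, j (for some M > 0) and Σ_{i,j∈[N]} A_{i,j} = 0. Then for a uniform random permutation π of [N] and every t ≥ 0: P( ‖ Σ_{i=1}^N A_{i,π(i)} ‖_op ≥ t ) ≤ 2d · exp( −t² / (24 N M²) ). -/

import Mathlib

open Finset
open scoped Classical

/-- The ℓ²→ℓ² operator (spectral) norm of a real `d×d` matrix:
the supremum of the Euclidean norm of `A·v` over the Euclidean unit ball. -/
noncomputable def matOpNorm {d : ℕ} (A : Matrix (Fin d) (Fin d) ℝ) : ℝ :=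
  ⨆ v : {v : Fin d → ℝ // ∑ i, (v i) ^ 2 ≤ 1}, Real.sqrt (∑ i, (A.mulVec v.1 i) ^ 2)

/-- Probability of an event under the uniform random permutation of `[N]`. -/
noncomputable def permProb (N : ℕ) (p : Equiv.Perm (Fin N) → Prop) : ℝ :=
  (∑ π : Equiv.Perm (Fin N), if p π then (1 : ℝ) else 0) / (Nat.factorial N : ℝ)

open Matrix
open scoped RealInnerProductSpace

variable {d : ℕ}

lemma matOpNorm_bddAbove (A : Matrix (Fin d) (Fin d) ℝ) :
    BddAbove (Set.range fun v : {v : Fin d → ℝ // ∑ i, (v i) ^ 2 ≤ 1} =>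
      Real.sqrt (∑ i, (A.mulVec v.1 i) ^ 2)) := by
  refine ⟨Real.sqrt (∑ i, ∑ j, (A i j) ^ 2), ?_⟩
  rintro x ⟨v, rfl⟩
  apply Real.sqrt_le_sqrt
  have h1 : ∀ i, (A.mulVec v.1 i) ^ 2 ≤ (∑ j, (A i j) ^ 2) * (∑ j, (v.1 j) ^ 2) := by
    intro i
    simpa [Matrix.mulVec, dotProduct] using
      Finset.sum_mul_sq_le_sq_mul_sq univ (fun j => A i j) (fun j => v.1 j)
  calc ∑ i, (A.mulVec v.1 i) ^ 2 ≤ ∑ i, (∑ j, (A i j) ^ 2) * (∑ j, (v.1 j) ^ 2) :=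
        Finset.sum_le_sum fun i _ => h1 i
    _ ≤ ∑ i, (∑ j, (A i j) ^ 2) * 1 := by
        refine Finset.sum_le_sum fun i _ => ?_
        have : (0:ℝ) ≤ ∑ j, (A i j)^2 := by positivity
        nlinarith [v.2]
    _ = ∑ i, ∑ j, (A i j) ^ 2 := by simp

lemma le_matOpNorm (A : Matrix (Fin d) (Fin d) ℝ) {v : Fin d → ℝ} (hv : ∑ i, (v i) ^ 2 ≤ 1) :
    Real.sqrt (∑ i, (A.mulVec v i) ^ 2) ≤ matOpNorm A :=
  le_ciSup (matOpNorm_bddAbove A) ⟨v, hv⟩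

lemma matOpNorm_nonneg (A : Matrix (Fin d) (Fin d) ℝ) : 0 ≤ matOpNorm A :=
  (Real.sqrt_nonneg _).trans (le_matOpNorm A (v := 0) (by simp))

lemma matOpNorm_le (A : Matrix (Fin d) (Fin d) ℝ) {c : ℝ}
    (h : ∀ v : Fin d → ℝ, ∑ i, (v i) ^ 2 ≤ 1 → Real.sqrt (∑ i, (A.mulVec v i) ^ 2) ≤ c) :
    matOpNorm A ≤ c := by
  haveI : Nonempty {v : Fin d → ℝ // ∑ i, (v i) ^ 2 ≤ 1} := ⟨⟨0, by simp⟩⟩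
  exact ciSup_le fun v => h v.1 v.2

lemma sumsq_eq_normsq (x : EuclideanSpace ℝ (Fin d)) : ∑ i, (x i) ^ 2 = ‖x‖ ^ 2 := by
  rw [EuclideanSpace.norm_eq, Real.sq_sqrt (by positivity)]
  simp [sq_abs]

lemma inner_eq_sum (x y : EuclideanSpace ℝ (Fin d)) : ⟪x, y⟫ = ∑ i, x i * y i := by
  simp [PiLp.inner_apply, RCLike.inner_apply, conj_trivial]
  exact Finset.sum_congr rfl fun i _ => mul_comm _ _

lemma toEuclideanLin_apply' (A : Matrix (Fin d) (Fin d) ℝ) (x : EuclideanSpace ℝ (Fin d))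
    (i : Fin d) : Matrix.toEuclideanLin A x i = A.mulVec x i := rfl

lemma norm_toEuclideanLin (A : Matrix (Fin d) (Fin d) ℝ) (x : EuclideanSpace ℝ (Fin d)) :
    ‖Matrix.toEuclideanLin A x‖ = Real.sqrt (∑ i, (A.mulVec x i) ^ 2) := by
  rw [show ∑ i, (A.mulVec x i) ^ 2 = ∑ i, ((Matrix.toEuclideanLin A x) i) ^ 2 from rfl,
    sumsq_eq_normsq, Real.sqrt_sq (norm_nonneg _)]

lemma norm_mulVec_le (A : Matrix (Fin d) (Fin d) ℝ) {M : ℝ} (hA : matOpNorm A ≤ M)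
    (x : EuclideanSpace ℝ (Fin d)) : ‖Matrix.toEuclideanLin A x‖ ≤ M * ‖x‖ := by
  rcases eq_or_ne x 0 with rfl | hx
  · simp
  · have hxn : (0:ℝ) < ‖x‖ := norm_pos_iff.2 hx
    set v : EuclideanSpace ℝ (Fin d) := ‖x‖⁻¹ • x with hv
    have hv1 : ∑ i, (v i) ^ 2 ≤ 1 := by
      rw [sumsq_eq_normsq, hv, norm_smul]
      simp [abs_of_nonneg (le_of_lt hxn), inv_mul_cancel₀ (ne_of_gt hxn)]
    have h2 : ‖Matrix.toEuclideanLin A v‖ ≤ matOpNorm A := by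
      rw [norm_toEuclideanLin]
      exact le_matOpNorm A hv1
    have h3 : Matrix.toEuclideanLin A v = ‖x‖⁻¹ • Matrix.toEuclideanLin A x := by
      rw [hv, _root_.map_smul]
    rw [h3, norm_smul] at h2
    simp only [norm_inv, norm_norm] at h2
    calc ‖Matrix.toEuclideanLin A x‖ = ‖x‖ * (‖x‖⁻¹ * ‖Matrix.toEuclideanLin A x‖) := by
          field_simp
      _ ≤ ‖x‖ * matOpNorm A := by
          exact mul_le_mul_of_nonneg_left h2 (le_of_lt hxn)
      _ ≤ ‖x‖ * M := mul_le_mul_of_nonneg_left (hA) hxn.le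
      _ = M * ‖x‖ := mul_comm _ _

-- eigen-expansion of toEuclideanLin
lemma eigen_expansion {S : Matrix (Fin d) (Fin d) ℝ} (hS : S.IsHermitian)
    (x : EuclideanSpace ℝ (Fin d)) :
    Matrix.toEuclideanLin S x
      = ∑ k, (hS.eigenvalues k * ⟪hS.eigenvectorBasis k, x⟫) • hS.eigenvectorBasis k := by
  conv_lhs => rw [← hS.eigenvectorBasis.sum_repr' x]
  rw [map_sum]
  refine Finset.sum_congr rfl fun k _ => ?_
  rw [_root_.map_smul]
  have h1 : Matrix.toEuclideanLin S (hS.eigenvectorBasis k)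
      = hS.eigenvalues k • hS.eigenvectorBasis k := by
    apply PiLp.ext
    intro i
    have := congrFun (hS.mulVec_eigenvectorBasis k) i
    simpa using this
  rw [h1, smul_smul, mul_comm]

lemma toEuclideanLin_eigen {S : Matrix (Fin d) (Fin d) ℝ} (hS : S.IsHermitian) (k : Fin d) :
    Matrix.toEuclideanLin S (hS.eigenvectorBasis k)
      = hS.eigenvalues k • (hS.eigenvectorBasis k : EuclideanSpace ℝ (Fin d)) := by
  apply PiLp.ext
  intro i
  have := congrFun (hS.mulVec_eigenvectorBasis k) i
  simpa using this

lemma parseval {S : Matrix (Fin d) (Fin d) ℝ} (hS : S.IsHermitian)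
    (x : EuclideanSpace ℝ (Fin d)) :
    ∑ l, ⟪hS.eigenvectorBasis l, x⟫ ^ 2 = ‖x‖ ^ 2 := by
  have h := hS.eigenvectorBasis.sum_inner_mul_inner x x
  rw [real_inner_self_eq_norm_sq] at h
  rw [← h]
  refine Finset.sum_congr rfl fun l _ => ?_
  rw [real_inner_comm x (hS.eigenvectorBasis l), sq]

lemma diff_apply {B C : Matrix (Fin d) (Fin d) ℝ} (hB : B.IsHermitian) (hC : C.IsHermitian)
    (k : Fin d) :
    Matrix.toEuclideanLin (B - C) (hB.eigenvectorBasis k)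
      = ∑ l, ((hB.eigenvalues k - hC.eigenvalues l)
          * ⟪hC.eigenvectorBasis l, hB.eigenvectorBasis k⟫) • hC.eigenvectorBasis l := by
  have h0 : Matrix.toEuclideanLin (B - C) (hB.eigenvectorBasis k)
      = Matrix.toEuclideanLin B (hB.eigenvectorBasis k)
        - Matrix.toEuclideanLin C (hB.eigenvectorBasis k) := by
    rw [map_sub]; rfl
  rw [h0, toEuclideanLin_eigen hB k, eigen_expansion hC (hB.eigenvectorBasis k)]
  have h1 : hB.eigenvalues k • (hB.eigenvectorBasis k : EuclideanSpace ℝ (Fin d))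
      = ∑ l, (hB.eigenvalues k * ⟪hC.eigenvectorBasis l, hB.eigenvectorBasis k⟫)
          • hC.eigenvectorBasis l := by
    conv_lhs => rw [← hC.eigenvectorBasis.sum_repr' (hB.eigenvectorBasis k)]
    rw [Finset.smul_sum]
    exact Finset.sum_congr rfl fun l _ => by rw [smul_smul]
  rw [h1, ← Finset.sum_sub_distrib]
  exact Finset.sum_congr rfl fun l _ => by rw [← sub_smul, ← sub_mul]

lemma diff_inner {B C : Matrix (Fin d) (Fin d) ℝ} (hB : B.IsHermitian) (hC : C.IsHermitian)
    (k : Fin d) :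
    ⟪(hB.eigenvectorBasis k : EuclideanSpace ℝ (Fin d)),
        Matrix.toEuclideanLin (B - C) (hB.eigenvectorBasis k)⟫
      = ∑ l, (hB.eigenvalues k - hC.eigenvalues l)
          * ⟪hC.eigenvectorBasis l, hB.eigenvectorBasis k⟫ ^ 2 := by
  rw [diff_apply hB hC k, inner_sum]
  refine Finset.sum_congr rfl fun l _ => ?_
  rw [real_inner_smul_right, real_inner_comm (hB.eigenvectorBasis k) (hC.eigenvectorBasis l)]
  ring

lemma diff_normsq {B C : Matrix (Fin d) (Fin d) ℝ} (hB : B.IsHermitian) (hC : C.IsHermitian)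
    (k : Fin d) :
    ‖Matrix.toEuclideanLin (B - C) (hB.eigenvectorBasis k)‖ ^ 2
      = ∑ l, (hB.eigenvalues k - hC.eigenvalues l) ^ 2
          * ⟪hC.eigenvectorBasis l, hB.eigenvectorBasis k⟫ ^ 2 := by
  rw [← real_inner_self_eq_norm_sq, diff_apply hB hC k,
    hC.eigenvectorBasis.orthonormal.inner_sum]
  refine Finset.sum_congr rfl fun l _ => ?_
  simp only [conj_trivial]
  ring

noncomputable def trE {S : Matrix (Fin d) (Fin d) ℝ} (hS : S.IsHermitian) (θ : ℝ) : ℝ :=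
  ∑ k, Real.exp (θ * hS.eigenvalues k)

noncomputable def Tq (Δ : Matrix (Fin d) (Fin d) ℝ) {S : Matrix (Fin d) (Fin d) ℝ}
    (hS : S.IsHermitian) (θ : ℝ) : ℝ :=
  ∑ k, Real.exp (θ * hS.eigenvalues k)
    * ⟪(hS.eigenvectorBasis k : EuclideanSpace ℝ (Fin d)),
        Matrix.toEuclideanLin Δ (hS.eigenvectorBasis k)⟫

noncomputable def Tsq (Δ : Matrix (Fin d) (Fin d) ℝ) {S : Matrix (Fin d) (Fin d) ℝ}
    (hS : S.IsHermitian) (θ : ℝ) : ℝ :=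
  ∑ k, Real.exp (θ * hS.eigenvalues k)
    * ‖Matrix.toEuclideanLin Δ (hS.eigenvectorBasis k)‖ ^ 2

lemma trE_nonneg {S : Matrix (Fin d) (Fin d) ℝ} (hS : S.IsHermitian) (θ : ℝ) :
    0 ≤ trE hS θ :=
  Finset.sum_nonneg fun k _ => (Real.exp_pos _).le

lemma trE_zero {S : Matrix (Fin d) (Fin d) ℝ} (hS : S.IsHermitian) : trE hS 0 = d := by
  simp [trE]

lemma Tq_self {S : Matrix (Fin d) (Fin d) ℝ} (hS : S.IsHermitian) (θ : ℝ) :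
    Tq S hS θ = ∑ k, hS.eigenvalues k * Real.exp (θ * hS.eigenvalues k) := by
  unfold Tq
  refine Finset.sum_congr rfl fun k _ => ?_
  rw [toEuclideanLin_eigen hS k, real_inner_smul_right, real_inner_self_eq_norm_sq,
    hS.eigenvectorBasis.orthonormal.1 k]
  norm_num
  ring

lemma Tq_sum {ι : Type*} (s : Finset ι) (Δ : ι → Matrix (Fin d) (Fin d) ℝ)
    {S : Matrix (Fin d) (Fin d) ℝ} (hS : S.IsHermitian) (θ : ℝ) :
    Tq (∑ p ∈ s, Δ p) hS θ = ∑ p ∈ s, Tq (Δ p) hS θ := by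
  unfold Tq
  rw [Finset.sum_comm]
  refine Finset.sum_congr rfl fun k _ => ?_
  rw [map_sum, LinearMap.coe_sum, Finset.sum_apply, inner_sum, Finset.mul_sum]

lemma Tq_smul (c : ℝ) (Δ : Matrix (Fin d) (Fin d) ℝ) {S : Matrix (Fin d) (Fin d) ℝ}
    (hS : S.IsHermitian) (θ : ℝ) : Tq (c • Δ) hS θ = c * Tq (Δ) hS θ := by
  unfold Tq
  rw [Finset.mul_sum]
  refine Finset.sum_congr rfl fun k _ => ?_
  rw [_root_.map_smul, LinearMap.smul_apply, real_inner_smul_right]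
  ring

lemma Tq_neg (Δ : Matrix (Fin d) (Fin d) ℝ) {S : Matrix (Fin d) (Fin d) ℝ}
    (hS : S.IsHermitian) (θ : ℝ) : Tq (-Δ) hS θ = - Tq (Δ) hS θ := by
  have := Tq_smul (-1) Δ hS θ
  simpa using this

lemma Tsq_neg (Δ : Matrix (Fin d) (Fin d) ℝ) {S : Matrix (Fin d) (Fin d) ℝ}
    (hS : S.IsHermitian) (θ : ℝ) : Tsq (-Δ) hS θ = Tsq (Δ) hS θ := by
  unfold Tsq
  refine Finset.sum_congr rfl fun k _ => ?_
  rw [map_neg, LinearMap.neg_apply, norm_neg]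

lemma Tq_congr (Δ : Matrix (Fin d) (Fin d) ℝ) {S S' : Matrix (Fin d) (Fin d) ℝ}
    (h : S = S') (hS : S.IsHermitian) (hS' : S'.IsHermitian) (θ : ℝ) :
    Tq Δ hS θ = Tq Δ hS' θ := by subst h; rfl

lemma Tsq_congr (Δ : Matrix (Fin d) (Fin d) ℝ) {S S' : Matrix (Fin d) (Fin d) ℝ}
    (h : S = S') (hS : S.IsHermitian) (hS' : S'.IsHermitian) (θ : ℝ) :
    Tsq Δ hS θ = Tsq Δ hS' θ := by subst h; rfl

lemma trE_congr {S S' : Matrix (Fin d) (Fin d) ℝ}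
    (h : S = S') (hS : S.IsHermitian) (hS' : S'.IsHermitian) (θ : ℝ) :
    trE hS θ = trE hS' θ := by subst h; rfl

-- scalar mean value inequality
lemma exp_mvi_aux {u : ℝ} (hu : 0 ≤ u) : Real.exp u - 1 ≤ u * (Real.exp u + 1) / 2 := by
  have key : ∀ x : ℝ, 0 ≤ x → 0 ≤ x * (Real.exp x + 1) / 2 - (Real.exp x - 1) := by
    intro x hx
    set g : ℝ → ℝ := fun y => y * (Real.exp y + 1) / 2 - (Real.exp y - 1) with hg
    have hderiv : ∀ y : ℝ, HasDerivAt g ((1 - Real.exp y + y * Real.exp y) / 2) y := by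
      intro y
      have h1 : HasDerivAt (fun y : ℝ => y * (Real.exp y + 1))
          ((Real.exp y + 1) + y * Real.exp y) y := by
        have := (hasDerivAt_id y).fun_mul ((Real.hasDerivAt_exp y).add_const 1)
        simpa [mul_comm] using this
      have h2 : HasDerivAt (fun y : ℝ => Real.exp y - 1) (Real.exp y) y :=
        (Real.hasDerivAt_exp y).sub_const 1
      have := (h1.div_const 2).fun_sub h2
      exact this.congr_deriv (by ring)
    have hd_nonneg : ∀ y : ℝ, 0 ≤ y → 0 ≤ (1 - Real.exp y + y * Real.exp y) / 2 := by
      intro y hy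
      have key2 : ∀ z : ℝ, 0 ≤ z → 0 ≤ 1 - Real.exp z + z * Real.exp z := by
        intro z hz
        set φ : ℝ → ℝ := fun w => 1 - Real.exp w + w * Real.exp w with hφ
        have hφd : ∀ w : ℝ, HasDerivAt φ (w * Real.exp w) w := by
          intro w
          have h1 : HasDerivAt (fun w : ℝ => w * Real.exp w)
              (Real.exp w + w * Real.exp w) w := by
            have := (hasDerivAt_id w).fun_mul (Real.hasDerivAt_exp w)
            simpa [mul_comm] using this
          have := ((hasDerivAt_const w (1:ℝ)).fun_sub (Real.hasDerivAt_exp w)).fun_add h1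
          exact this.congr_deriv (by ring)
        have hmono : MonotoneOn φ (Set.Ici 0) := by
          apply monotoneOn_of_deriv_nonneg (convex_Ici 0)
          · exact (Continuous.continuousOn (by continuity))
          · intro w _
            exact (hφd w).differentiableAt.differentiableWithinAt
          · intro w hw
            rw [(hφd w).deriv]
            have hw' : 0 < w := by simpa [interior_Ici] using hw
            exact mul_nonneg hw'.le (Real.exp_pos w).le
        have := hmono (Set.self_mem_Ici) (Set.mem_Ici.2 hz) hz
        simpa [hφ] using this
      have := key2 y hy
      linarith
    have hmono : MonotoneOn g (Set.Ici 0) := by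
      apply monotoneOn_of_deriv_nonneg (convex_Ici 0)
      · exact (Continuous.continuousOn (by continuity))
      · intro w _
        exact (hderiv w).differentiableAt.differentiableWithinAt
      · intro w hw
        rw [(hderiv w).deriv]
        have hw' : 0 < w := by simpa [interior_Ici] using hw
        exact hd_nonneg w hw'.le
    have := hmono (Set.self_mem_Ici) (Set.mem_Ici.2 hx) hx
    simpa [hg] using this
  linarith [key u hu]

lemma abs_exp_sub_exp (a b : ℝ) :
    |Real.exp a - Real.exp b| ≤ |a - b| * (Real.exp a + Real.exp b) / 2 := by
  wlog hab : b ≤ a with H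
  · have := H b a (le_of_not_ge hab)
    rw [abs_sub_comm (Real.exp b), abs_sub_comm b a, add_comm (Real.exp b)] at this
    exact this
  have hu : 0 ≤ a - b := by linarith
  have h1 := exp_mvi_aux hu
  have h2 : Real.exp a - Real.exp b = Real.exp b * (Real.exp (a - b) - 1) := by
    rw [mul_sub, ← Real.exp_add]
    ring_nf
  have h3 : Real.exp b * (Real.exp (a-b) - 1) ≤ Real.exp b * ((a-b) * (Real.exp (a-b) + 1) / 2) :=
    mul_le_mul_of_nonneg_left h1 (Real.exp_pos b).le
  have he : Real.exp b * Real.exp (a - b) = Real.exp a := by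
    rw [← Real.exp_add]; ring_nf
  have h4 : Real.exp b * ((a-b) * (Real.exp (a-b) + 1) / 2) = (a - b) * (Real.exp a + Real.exp b) / 2 := by
    linear_combination ((a - b) / 2) * he
  have hexp : 0 ≤ Real.exp a - Real.exp b := by
    have := Real.exp_le_exp.2 hab
    linarith
  rw [abs_of_nonneg hexp, abs_of_nonneg hu]
  rw [h2]
  calc Real.exp b * (Real.exp (a-b) - 1) ≤ _ := h3
    _ = _ := h4

lemma Tq_congr' {Δ Δ' S S' : Matrix (Fin d) (Fin d) ℝ} (hΔ : Δ = Δ')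
    (h : S = S') (hS : S.IsHermitian) (hS' : S'.IsHermitian) (θ : ℝ) :
    Tq Δ hS θ = Tq Δ' hS' θ := by subst hΔ; subst h; rfl

lemma Tsq_congr' {Δ Δ' S S' : Matrix (Fin d) (Fin d) ℝ} (hΔ : Δ = Δ')
    (h : S = S') (hS : S.IsHermitian) (hS' : S'.IsHermitian) (θ : ℝ) :
    Tsq Δ hS θ = Tsq Δ' hS' θ := by subst hΔ; subst h; rfl

lemma matrix_mvi {B C : Matrix (Fin d) (Fin d) ℝ} (hB : B.IsHermitian) (hC : C.IsHermitian)
    (θ : ℝ) :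
    |Tq (B - C) hB θ - Tq (B - C) hC θ|
      ≤ |θ| / 2 * (Tsq (B - C) hB θ + Tsq (B - C) hC θ) := by
  set lam := hB.eigenvalues with hlam
  set mu := hC.eigenvalues with hmu
  set c : Fin d → Fin d → ℝ := fun k l => ⟪(hC.eigenvectorBasis l : EuclideanSpace ℝ (Fin d)),
    hB.eigenvectorBasis k⟫ with hc
  have hBC : B - C = -(C - B) := (neg_sub C B).symm
  have hTqB : Tq (B - C) hB θ
      = ∑ k, ∑ l, Real.exp (θ * lam k) * ((lam k - mu l) * (c k l) ^ 2) := by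
    unfold Tq
    refine Finset.sum_congr rfl fun k _ => ?_
    rw [diff_inner hB hC k, Finset.mul_sum]
  have hTqC : Tq (B - C) hC θ
      = ∑ k, ∑ l, Real.exp (θ * mu l) * ((lam k - mu l) * (c k l) ^ 2) := by
    rw [hBC, Tq_neg]
    have h1 : Tq (C - B) hC θ
        = ∑ l, ∑ k, Real.exp (θ * mu l) * ((mu l - lam k)
            * (⟪(hB.eigenvectorBasis k : EuclideanSpace ℝ (Fin d)), hC.eigenvectorBasis l⟫) ^ 2) := by
      unfold Tq
      refine Finset.sum_congr rfl fun l _ => ?_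
      rw [diff_inner hC hB l, Finset.mul_sum]
    rw [h1, Finset.sum_comm, ← Finset.sum_neg_distrib]
    refine Finset.sum_congr rfl fun k _ => ?_
    rw [← Finset.sum_neg_distrib]
    refine Finset.sum_congr rfl fun l _ => ?_
    rw [real_inner_comm]
    ring
  have hTsB : Tsq (B - C) hB θ
      = ∑ k, ∑ l, Real.exp (θ * lam k) * ((lam k - mu l) ^ 2 * (c k l) ^ 2) := by
    unfold Tsq
    refine Finset.sum_congr rfl fun k _ => ?_
    rw [diff_normsq hB hC k, Finset.mul_sum]
  have hTsC : Tsq (B - C) hC θ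
      = ∑ k, ∑ l, Real.exp (θ * mu l) * ((lam k - mu l) ^ 2 * (c k l) ^ 2) := by
    rw [hBC, Tsq_neg]
    have h1 : Tsq (C - B) hC θ
        = ∑ l, ∑ k, Real.exp (θ * mu l) * ((mu l - lam k) ^ 2
            * (⟪(hB.eigenvectorBasis k : EuclideanSpace ℝ (Fin d)), hC.eigenvectorBasis l⟫) ^ 2) := by
      unfold Tsq
      refine Finset.sum_congr rfl fun l _ => ?_
      rw [diff_normsq hC hB l, Finset.mul_sum]
    rw [h1, Finset.sum_comm]
    refine Finset.sum_congr rfl fun k _ => Finset.sum_congr rfl fun l _ => ?_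
    rw [real_inner_comm]
    ring
  rw [hTqB, hTqC, ← Finset.sum_sub_distrib]
  simp_rw [← Finset.sum_sub_distrib]
  calc |∑ k, ∑ l, (Real.exp (θ * lam k) * ((lam k - mu l) * c k l ^ 2)
          - Real.exp (θ * mu l) * ((lam k - mu l) * c k l ^ 2))|
      ≤ ∑ k, ∑ l, |Real.exp (θ * lam k) * ((lam k - mu l) * c k l ^ 2)
          - Real.exp (θ * mu l) * ((lam k - mu l) * c k l ^ 2)| := by
        refine (Finset.abs_sum_le_sum_abs _ _).trans (Finset.sum_le_sum fun k _ => ?_)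
        exact Finset.abs_sum_le_sum_abs _ _
    _ ≤ ∑ k, ∑ l, |θ| / 2 * (Real.exp (θ * lam k) * ((lam k - mu l) ^ 2 * c k l ^ 2)
          + Real.exp (θ * mu l) * ((lam k - mu l) ^ 2 * c k l ^ 2)) := by
        refine Finset.sum_le_sum fun k _ => Finset.sum_le_sum fun l _ => ?_
        have h1 : |Real.exp (θ * lam k) * ((lam k - mu l) * c k l ^ 2)
            - Real.exp (θ * mu l) * ((lam k - mu l) * c k l ^ 2)|
            = |Real.exp (θ * lam k) - Real.exp (θ * mu l)| * (|lam k - mu l| * c k l ^ 2) := by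
          rw [show Real.exp (θ * lam k) * ((lam k - mu l) * c k l ^ 2)
              - Real.exp (θ * mu l) * ((lam k - mu l) * c k l ^ 2)
              = (Real.exp (θ * lam k) - Real.exp (θ * mu l)) * ((lam k - mu l) * c k l ^ 2) from
              by ring, abs_mul, abs_mul, abs_of_nonneg (sq_nonneg (c k l))]
        rw [h1]
        have h2 := abs_exp_sub_exp (θ * lam k) (θ * mu l)
        have h3 : |θ * lam k - θ * mu l| = |θ| * |lam k - mu l| := by
          rw [← abs_mul]
          congr 1
          ring
        have h4 : 0 ≤ |lam k - mu l| * c k l ^ 2 := by positivity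
        calc |Real.exp (θ * lam k) - Real.exp (θ * mu l)| * (|lam k - mu l| * c k l ^ 2)
            ≤ (|θ| * |lam k - mu l| * (Real.exp (θ * lam k) + Real.exp (θ * mu l)) / 2)
              * (|lam k - mu l| * c k l ^ 2) := by
              apply mul_le_mul_of_nonneg_right _ h4
              rw [← h3]
              exact h2
          _ = |θ| / 2 * (Real.exp (θ * lam k) * ((lam k - mu l) ^ 2 * c k l ^ 2)
              + Real.exp (θ * mu l) * ((lam k - mu l) ^ 2 * c k l ^ 2)) := by
              rw [← sq_abs (lam k - mu l)]
              ring
    _ = |θ| / 2 * (Tsq (B - C) hB θ + Tsq (B - C) hC θ) := by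
        rw [hTsB, hTsC, ← Finset.sum_add_distrib, Finset.mul_sum]
        refine Finset.sum_congr rfl fun k _ => ?_
        rw [← Finset.sum_add_distrib, Finset.mul_sum]

lemma Tsq_le {Δ S : Matrix (Fin d) (Fin d) ℝ} (hS : S.IsHermitian) {c : ℝ} (hc : 0 ≤ c)
    (hΔ : ∀ x : EuclideanSpace ℝ (Fin d), ‖Matrix.toEuclideanLin Δ x‖ ≤ c * ‖x‖) (θ : ℝ) :
    Tsq Δ hS θ ≤ c ^ 2 * trE hS θ := by
  unfold Tsq trE
  rw [Finset.mul_sum]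
  refine Finset.sum_le_sum fun k _ => ?_
  have h1 : ‖Matrix.toEuclideanLin Δ (hS.eigenvectorBasis k)‖ ≤ c := by
    have := hΔ (hS.eigenvectorBasis k)
    rwa [hS.eigenvectorBasis.orthonormal.1 k, mul_one] at this
  have h2 : ‖Matrix.toEuclideanLin Δ (hS.eigenvectorBasis k)‖ ^ 2 ≤ c ^ 2 :=
    pow_le_pow_left₀ (norm_nonneg _) h1 2
  calc Real.exp (θ * hS.eigenvalues k) * ‖Matrix.toEuclideanLin Δ (hS.eigenvectorBasis k)‖ ^ 2
      ≤ Real.exp (θ * hS.eigenvalues k) * c ^ 2 :=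
        mul_le_mul_of_nonneg_left h2 (Real.exp_pos _).le
    _ = c ^ 2 * Real.exp (θ * hS.eigenvalues k) := mul_comm _ _

lemma matOpNorm_le_sup_abs_eigen (hne : (Finset.univ : Finset (Fin d)).Nonempty)
    {S : Matrix (Fin d) (Fin d) ℝ} (hS : S.IsHermitian) :
    matOpNorm S ≤ Finset.univ.sup' hne (fun k => |hS.eigenvalues k|) := by
  haveI : Nonempty (Fin d) := ⟨hne.choose⟩
  set R := Finset.univ.sup' hne (fun k => |hS.eigenvalues k|) with hR
  have hR0 : 0 ≤ R := le_trans (abs_nonneg _)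
    (Finset.le_sup' (fun k => |hS.eigenvalues k|) (Finset.mem_univ (Classical.arbitrary (Fin d))))
  apply matOpNorm_le
  intro v hv
  set x : EuclideanSpace ℝ (Fin d) := (WithLp.equiv 2 (Fin d → ℝ)).symm v with hx
  have hmv : ∀ i, S.mulVec v i = Matrix.toEuclideanLin S x i := fun i => rfl
  have hns : Real.sqrt (∑ i, (S.mulVec v i) ^ 2) = ‖Matrix.toEuclideanLin S x‖ := by
    simp_rw [hmv]
    rw [sumsq_eq_normsq, Real.sqrt_sq (norm_nonneg _)]
  rw [hns]
  have hxnorm : ‖x‖ ^ 2 ≤ 1 := by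
    rw [← sumsq_eq_normsq]
    exact hv
  have hexp : ‖Matrix.toEuclideanLin S x‖ ^ 2
      = ∑ k, (hS.eigenvalues k * ⟪hS.eigenvectorBasis k, x⟫) ^ 2 := by
    rw [← real_inner_self_eq_norm_sq, eigen_expansion hS x,
      hS.eigenvectorBasis.orthonormal.inner_sum]
    simp only [conj_trivial]
    refine Finset.sum_congr rfl fun k _ => ?_
    ring
  have hle : ‖Matrix.toEuclideanLin S x‖ ^ 2 ≤ R ^ 2 := by
    rw [hexp]
    calc ∑ k, (hS.eigenvalues k * ⟪hS.eigenvectorBasis k, x⟫) ^ 2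
        ≤ ∑ k, R ^ 2 * ⟪hS.eigenvectorBasis k, x⟫ ^ 2 := by
          refine Finset.sum_le_sum fun k _ => ?_
          rw [mul_pow]
          apply mul_le_mul_of_nonneg_right _ (sq_nonneg _)
          rw [← sq_abs (hS.eigenvalues k)]
          apply pow_le_pow_left₀ (abs_nonneg _)
          exact Finset.le_sup' (fun k => |hS.eigenvalues k|) (Finset.mem_univ k)
      _ = R ^ 2 * ‖x‖ ^ 2 := by rw [← Finset.mul_sum, parseval hS x]
      _ ≤ R ^ 2 * 1 := mul_le_mul_of_nonneg_left hxnorm (sq_nonneg _)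
      _ = R ^ 2 := mul_one _
  calc ‖Matrix.toEuclideanLin S x‖ = Real.sqrt (‖Matrix.toEuclideanLin S x‖ ^ 2) :=
        (Real.sqrt_sq (norm_nonneg _)).symm
    _ ≤ Real.sqrt (R ^ 2) := Real.sqrt_le_sqrt hle
    _ = R := Real.sqrt_sq hR0

variable {N : ℕ}

noncomputable def Smat (A : Fin N → Fin N → Matrix (Fin d) (Fin d) ℝ)
    (π : Equiv.Perm (Fin N)) : Matrix (Fin d) (Fin d) ℝ := ∑ i, A i (π i)

noncomputable def Dmat (A : Fin N → Fin N → Matrix (Fin d) (Fin d) ℝ)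
    (π : Equiv.Perm (Fin N)) (i j : Fin N) : Matrix (Fin d) (Fin d) ℝ :=
  A i (π i) + A j (π j) - A i (π j) - A j (π i)

lemma Smat_herm {A : Fin N → Fin N → Matrix (Fin d) (Fin d) ℝ}
    (hsymm : ∀ i j, (A i j).IsSymm) (π : Equiv.Perm (Fin N)) : (Smat A π).IsHermitian := by
  rw [Matrix.IsHermitian, Matrix.conjTranspose_eq_transpose_of_trivial, Smat,
    Matrix.transpose_sum]
  exact Finset.sum_congr rfl fun i _ => hsymm i (π i)

lemma Dmat_swap (A : Fin N → Fin N → Matrix (Fin d) (Fin d) ℝ) (π : Equiv.Perm (Fin N))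
    (i j : Fin N) : Dmat A (π * Equiv.swap i j) i j = -(Dmat A π i j) := by
  unfold Dmat
  simp only [Equiv.Perm.mul_apply, Equiv.swap_apply_left, Equiv.swap_apply_right]
  abel

lemma Smat_swap (A : Fin N → Fin N → Matrix (Fin d) (Fin d) ℝ) (π : Equiv.Perm (Fin N))
    {i j : Fin N} (hij : i ≠ j) :
    Smat A (π * Equiv.swap i j) = Smat A π - Dmat A π i j := by
  unfold Smat
  have h : ∀ m : Fin N, A m ((π * Equiv.swap i j) m)
      = A m (π m) + (if m = i then A i (π j) - A i (π i) else 0)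
        + (if m = j then A j (π i) - A j (π j) else 0) := by
    intro m
    rcases eq_or_ne m i with rfl | hmi
    · simp only [Equiv.Perm.mul_apply, Equiv.swap_apply_left, if_neg hij, eq_self_iff_true,
        if_true, add_zero]
      rw [add_comm, sub_add_cancel]
    · rcases eq_or_ne m j with rfl | hmj
      · simp only [Equiv.Perm.mul_apply, Equiv.swap_apply_right, if_neg hmi, eq_self_iff_true,
          if_true, add_zero]
        rw [add_comm, sub_add_cancel]
      · simp only [Equiv.Perm.mul_apply, Equiv.swap_apply_of_ne_of_ne hmi hmj,
          if_neg hmi, if_neg hmj]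
        abel
  rw [Finset.sum_congr rfl fun m _ => h m]
  rw [Finset.sum_add_distrib, Finset.sum_add_distrib, Finset.sum_ite_eq' Finset.univ i,
    Finset.sum_ite_eq' Finset.univ j]
  simp only [Finset.mem_univ, if_pos]
  unfold Dmat
  abel

lemma Dmat_stein {A : Fin N → Fin N → Matrix (Fin d) (Fin d) ℝ}
    (hsum : ∑ i, ∑ j, A i j = 0) (π : Equiv.Perm (Fin N)) :
    ∑ p ∈ Finset.univ.offDiag, Dmat A π p.1 p.2 = (2 * N) • Smat A π := by
  have hrow : ∀ m : Fin N, ∑ j, A m (π j) = ∑ j, A m j := fun m =>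
    Equiv.sum_comp π (fun j => A m j)
  have e1 : ∑ i : Fin N, ∑ _j : Fin N, A i (π i) = N • Smat A π := by
    rw [show ∑ i : Fin N, ∑ _j : Fin N, A i (π i)
        = ∑ i : Fin N, (Finset.univ.card (α := Fin N) • A i (π i)) from
      Finset.sum_congr rfl fun i _ => Finset.sum_const _, ← Finset.smul_sum]
    simp only [Finset.card_univ, Fintype.card_fin]
    rfl
  have e2 : ∑ _i : Fin N, ∑ j : Fin N, A j (π j) = N • Smat A π := by
    rw [Finset.sum_const]
    simp only [Finset.card_univ, Fintype.card_fin]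
    rfl
  have e3 : ∑ i : Fin N, ∑ j : Fin N, A i (π j) = 0 := by
    rw [Finset.sum_congr rfl fun i _ => hrow i]
    exact hsum
  have e4 : ∑ i : Fin N, ∑ j : Fin N, A j (π i) = 0 := by
    rw [Finset.sum_comm]
    rw [Finset.sum_congr rfl fun j _ => hrow j]
    exact hsum
  have hall : ∑ p ∈ (Finset.univ ×ˢ Finset.univ : Finset (Fin N × Fin N)),
      Dmat A π p.1 p.2 = (2 * N) • Smat A π := by
    rw [Finset.sum_product]
    unfold Dmat
    simp only [Finset.sum_add_distrib, Finset.sum_sub_distrib]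
    rw [e1, e2, e3, e4, two_mul, add_nsmul]
    abel
  have hdiag : ∑ p ∈ (Finset.univ : Finset (Fin N)).diag, Dmat A π p.1 p.2 = 0 := by
    refine Finset.sum_eq_zero fun p hp => ?_
    have h12 : p.1 = p.2 := (Finset.mem_diag.1 hp).2
    unfold Dmat
    rw [← h12]
    abel
  have hsplit := Finset.sum_union (f := fun p : Fin N × Fin N => Dmat A π p.1 p.2)
    (Finset.disjoint_diag_offDiag (Finset.univ : Finset (Fin N)))
  rw [Finset.diag_union_offDiag] at hsplit
  rw [hall, hdiag, zero_add] at hsplit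
  exact hsplit.symm

lemma Dmat_bound {A : Fin N → Fin N → Matrix (Fin d) (Fin d) ℝ} {M : ℝ}
    (hbd : ∀ i j, matOpNorm (A i j) ≤ M) (π : Equiv.Perm (Fin N)) (i j : Fin N)
    (x : EuclideanSpace ℝ (Fin d)) :
    ‖Matrix.toEuclideanLin (Dmat A π i j) x‖ ≤ (4 * M) * ‖x‖ := by
  unfold Dmat
  rw [map_sub, map_sub, map_add]
  simp only [LinearMap.sub_apply, LinearMap.add_apply]
  calc ‖Matrix.toEuclideanLin (A i (π i)) x + Matrix.toEuclideanLin (A j (π j)) x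
        - Matrix.toEuclideanLin (A i (π j)) x - Matrix.toEuclideanLin (A j (π i)) x‖
      ≤ ‖Matrix.toEuclideanLin (A i (π i)) x + Matrix.toEuclideanLin (A j (π j)) x
        - Matrix.toEuclideanLin (A i (π j)) x‖ + ‖Matrix.toEuclideanLin (A j (π i)) x‖ :=
        norm_sub_le _ _
    _ ≤ ‖Matrix.toEuclideanLin (A i (π i)) x + Matrix.toEuclideanLin (A j (π j)) x‖
        + ‖Matrix.toEuclideanLin (A i (π j)) x‖ + ‖Matrix.toEuclideanLin (A j (π i)) x‖ := by
        gcongr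
        exact norm_sub_le _ _
    _ ≤ ‖Matrix.toEuclideanLin (A i (π i)) x‖ + ‖Matrix.toEuclideanLin (A j (π j)) x‖
        + ‖Matrix.toEuclideanLin (A i (π j)) x‖ + ‖Matrix.toEuclideanLin (A j (π i)) x‖ := by
        gcongr
        exact norm_add_le _ _
    _ ≤ M * ‖x‖ + M * ‖x‖ + M * ‖x‖ + M * ‖x‖ := by
        gcongr <;> exact norm_mulVec_le _ (hbd _ _) x
    _ = (4 * M) * ‖x‖ := by ring

lemma key_bound {A : Fin N → Fin N → Matrix (Fin d) (Fin d) ℝ}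
    (hsymm : ∀ i j, (A i j).IsSymm) (hsum : ∑ i, ∑ j, A i j = 0)
    {M : ℝ} (hM0 : 0 ≤ M) (hbd : ∀ i j, matOpNorm (A i j) ≤ M) (hN : 1 ≤ N) (θ : ℝ) :
    |∑ π : Equiv.Perm (Fin N), Tq (Smat A π) (Smat_herm hsymm π) θ|
      ≤ 4 * N * M ^ 2 * |θ| * ∑ π : Equiv.Perm (Fin N), trE (Smat_herm hsymm π) θ := by
  classical
  set hh : ∀ π : Equiv.Perm (Fin N), (Smat A π).IsHermitian := Smat_herm hsymm with hhdef
  set m : ℝ := ∑ π : Equiv.Perm (Fin N), trE (hh π) θ with hm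
  have hm0 : 0 ≤ m := Finset.sum_nonneg fun π _ => trE_nonneg _ _
  -- Stein identity
  have hstein : ∀ π : Equiv.Perm (Fin N), (2 * (N:ℝ)) * Tq (Smat A π) (hh π) θ
      = ∑ p ∈ Finset.univ.offDiag, Tq (Dmat A π p.1 p.2) (hh π) θ := by
    intro π
    have hc : (2 * (N:ℝ)) • Smat A π = (2 * N) • Smat A π := by
      rw [show (2 * (N:ℝ)) = ((2 * N : ℕ) : ℝ) by push_cast; ring, Nat.cast_smul_eq_nsmul]
    calc (2 * (N:ℝ)) * Tq (Smat A π) (hh π) θ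
        = Tq ((2 * (N:ℝ)) • Smat A π) (hh π) θ := (Tq_smul _ _ _ _).symm
      _ = Tq (∑ p ∈ Finset.univ.offDiag, Dmat A π p.1 p.2) (hh π) θ := by
          rw [hc, ← Dmat_stein hsum π]
      _ = ∑ p ∈ Finset.univ.offDiag, Tq (Dmat A π p.1 p.2) (hh π) θ := Tq_sum _ _ _ _
  -- per-pair bound
  have hpair : ∀ p ∈ (Finset.univ : Finset (Fin N)).offDiag,
      |∑ π : Equiv.Perm (Fin N), Tq (Dmat A π p.1 p.2) (hh π) θ|
        ≤ |θ| / 2 * ∑ π : Equiv.Perm (Fin N), Tsq (Dmat A π p.1 p.2) (hh π) θ := by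
    rintro ⟨i, j⟩ hp
    have hij : i ≠ j := (Finset.mem_offDiag.1 hp).2.2
    set s : Equiv.Perm (Fin N) := Equiv.swap i j with hs
    have hC : ∀ π : Equiv.Perm (Fin N), (Smat A π - Dmat A π i j).IsHermitian := fun π =>
      Smat_swap A π hij ▸ hh (π * s)
    set F : Equiv.Perm (Fin N) → ℝ := fun π => Tq (Dmat A π i j) (hh π) θ with hF
    set G : Equiv.Perm (Fin N) → ℝ := fun π => Tq (Dmat A π i j) (hC π) θ with hG
    set Q : ℝ := ∑ π : Equiv.Perm (Fin N), Tsq (Dmat A π i j) (hh π) θ with hQ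
    have hswapF : ∀ π : Equiv.Perm (Fin N), F (π * s) = - G π := by
      intro π
      calc F (π * s) = Tq (-(Dmat A π i j)) (hC π) θ :=
            Tq_congr' (Dmat_swap A π i j) (Smat_swap A π hij) (hh (π * s)) (hC π) θ
        _ = - G π := Tq_neg _ _ _
    have hrei : ∑ π : Equiv.Perm (Fin N), F π = ∑ π : Equiv.Perm (Fin N), F (π * s) :=
      (Fintype.sum_equiv (Equiv.mulRight s) (fun π => F (π * s)) F (fun _ => rfl)).symm
    have h2X : (2 : ℝ) * ∑ π : Equiv.Perm (Fin N), F π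
        = ∑ π : Equiv.Perm (Fin N), (F π - G π) := by
      rw [Finset.sum_sub_distrib, two_mul]
      congr 1
      rw [hrei]
      rw [Finset.sum_congr rfl fun π _ => hswapF π, Finset.sum_neg_distrib]
    have hmvi : ∀ π : Equiv.Perm (Fin N), |F π - G π|
        ≤ |θ| / 2 * (Tsq (Dmat A π i j) (hh π) θ + Tsq (Dmat A π i j) (hC π) θ) := by
      intro π
      have := matrix_mvi (hh π) (hC π) θ
      rwa [sub_sub_cancel] at this
    have hQC : ∑ π : Equiv.Perm (Fin N), Tsq (Dmat A π i j) (hC π) θ = Q := by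
      have hrei2 : ∑ π : Equiv.Perm (Fin N), Tsq (Dmat A π i j) (hC π) θ
          = ∑ π : Equiv.Perm (Fin N), Tsq (Dmat A (π * s) i j) (hC (π * s)) θ :=
        (Fintype.sum_equiv (Equiv.mulRight s)
          (fun π => Tsq (Dmat A (π * s) i j) (hC (π * s)) θ)
          (fun π => Tsq (Dmat A π i j) (hC π) θ) (fun _ => rfl)).symm
      rw [hrei2, hQ]
      refine Finset.sum_congr rfl fun π _ => ?_
      have heq : Smat A (π * s) - Dmat A (π * s) i j = Smat A π := by
        rw [show (π * s) = π * Equiv.swap i j from rfl, Dmat_swap, Smat_swap A π hij,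
          sub_neg_eq_add, sub_add_cancel]
      calc Tsq (Dmat A (π * s) i j) (hC (π * s)) θ = Tsq (-(Dmat A π i j)) (hh π) θ :=
            Tsq_congr' (Dmat_swap A π i j) heq (hC (π * s)) (hh π) θ
        _ = Tsq (Dmat A π i j) (hh π) θ := Tsq_neg _ _ _
    calc |∑ π : Equiv.Perm (Fin N), F π|
        = (1/2) * |(2:ℝ) * ∑ π : Equiv.Perm (Fin N), F π| := by
          rw [abs_mul]
          rw [abs_of_nonneg (by norm_num : (0:ℝ) ≤ (2:ℝ))]
          ring
      _ = (1/2) * |∑ π : Equiv.Perm (Fin N), (F π - G π)| := by rw [h2X]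
      _ ≤ (1/2) * ∑ π : Equiv.Perm (Fin N), |F π - G π| := by
          apply mul_le_mul_of_nonneg_left (Finset.abs_sum_le_sum_abs _ _)
          norm_num
      _ ≤ (1/2) * ∑ π : Equiv.Perm (Fin N),
            |θ| / 2 * (Tsq (Dmat A π i j) (hh π) θ + Tsq (Dmat A π i j) (hC π) θ) := by
          apply mul_le_mul_of_nonneg_left (Finset.sum_le_sum fun π _ => hmvi π)
          norm_num
      _ = |θ| / 2 * Q := by
          rw [← Finset.mul_sum, Finset.sum_add_distrib, hQC]
          rw [show (∑ π : Equiv.Perm (Fin N), Tsq (Dmat A π i j) (hh π) θ) = Q from rfl]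
          ring
  -- Tsq bound
  have hTsq : ∀ p ∈ (Finset.univ : Finset (Fin N)).offDiag,
      ∑ π : Equiv.Perm (Fin N), Tsq (Dmat A π p.1 p.2) (hh π) θ ≤ (16 * M ^ 2) * m := by
    rintro ⟨i, j⟩ _
    rw [hm, Finset.mul_sum]
    refine Finset.sum_le_sum fun π _ => ?_
    have := Tsq_le (hh π) (by positivity : (0:ℝ) ≤ 4 * M) (Dmat_bound hbd π i j) θ
    calc Tsq (Dmat A π i j) (hh π) θ ≤ (4 * M) ^ 2 * trE (hh π) θ := this
      _ = 16 * M ^ 2 * trE (hh π) θ := by ring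
  -- combine
  have hX : (2 * (N:ℝ)) * ∑ π : Equiv.Perm (Fin N), Tq (Smat A π) (hh π) θ
      = ∑ p ∈ (Finset.univ : Finset (Fin N)).offDiag,
          ∑ π : Equiv.Perm (Fin N), Tq (Dmat A π p.1 p.2) (hh π) θ := by
    rw [Finset.mul_sum, Finset.sum_congr rfl fun π _ => hstein π, Finset.sum_comm]
  have hcard : ((Finset.univ : Finset (Fin N)).offDiag.card : ℝ) ≤ (N:ℝ) ^ 2 := by
    rw [Finset.offDiag_card]
    simp only [Finset.card_univ, Fintype.card_fin]
    calc ((N * N - N : ℕ) : ℝ) ≤ ((N * N : ℕ) : ℝ) := Nat.cast_le.2 (Nat.sub_le _ _)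
      _ = (N:ℝ) ^ 2 := by push_cast; ring
  have habs : (2 * (N:ℝ)) * |∑ π : Equiv.Perm (Fin N), Tq (Smat A π) (hh π) θ|
      ≤ (N:ℝ) ^ 2 * (|θ| / 2 * ((16 * M ^ 2) * m)) := by
    have h1 : |(2 * (N:ℝ)) * ∑ π : Equiv.Perm (Fin N), Tq (Smat A π) (hh π) θ|
        = (2 * (N:ℝ)) * |∑ π : Equiv.Perm (Fin N), Tq (Smat A π) (hh π) θ| := by
      rw [abs_mul, abs_of_nonneg (by positivity : (0:ℝ) ≤ 2 * (N:ℝ))]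
    rw [← h1, hX]
    calc |∑ p ∈ (Finset.univ : Finset (Fin N)).offDiag,
          ∑ π : Equiv.Perm (Fin N), Tq (Dmat A π p.1 p.2) (hh π) θ|
        ≤ ∑ p ∈ (Finset.univ : Finset (Fin N)).offDiag,
            |∑ π : Equiv.Perm (Fin N), Tq (Dmat A π p.1 p.2) (hh π) θ| :=
          Finset.abs_sum_le_sum_abs _ _
      _ ≤ ∑ _p ∈ (Finset.univ : Finset (Fin N)).offDiag, |θ| / 2 * ((16 * M ^ 2) * m) := by
          refine Finset.sum_le_sum fun p hp => ?_
          refine (hpair p hp).trans ?_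
          apply mul_le_mul_of_nonneg_left (hTsq p hp) (by positivity)
      _ = ((Finset.univ : Finset (Fin N)).offDiag.card : ℝ) * (|θ| / 2 * ((16 * M ^ 2) * m)) := by
          rw [Finset.sum_const, nsmul_eq_mul]
      _ ≤ (N:ℝ) ^ 2 * (|θ| / 2 * ((16 * M ^ 2) * m)) := by
          apply mul_le_mul_of_nonneg_right hcard (by positivity)
  have hN1 : (1:ℝ) ≤ (N:ℝ) := Nat.one_le_cast.2 hN
  have h2N : (0:ℝ) < 2 * (N:ℝ) := by linarith
  apply le_of_mul_le_mul_left _ h2N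
  calc 2 * (N:ℝ) * |∑ π : Equiv.Perm (Fin N), Tq (Smat A π) (hh π) θ|
      ≤ (N:ℝ) ^ 2 * (|θ| / 2 * ((16 * M ^ 2) * m)) := habs
    _ = (N:ℝ) * ((N:ℝ) * (8 * M ^ 2 * |θ| * m)) := by ring
    _ = 2 * (N:ℝ) * (4 * (N:ℝ) * M ^ 2 * |θ| * m) := by ring


/-- Combinatorial matrix Hoeffding inequality. -/
theorem combinatorial_matrix_hoeffding
    (d N : ℕ) (hd : 1 ≤ d) (hN : 1 ≤ N)
    (A : Fin N → Fin N → Matrix (Fin d) (Fin d) ℝ)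
    (hsymm : ∀ i j, (A i j).IsSymm)
    (M : ℝ) (hM : 0 < M)
    (hbd : ∀ i j, matOpNorm (A i j) ≤ M)
    (hsum : ∑ i, ∑ j, A i j = 0)
    (t : ℝ) (ht : 0 ≤ t) :
    permProb N (fun π => t ≤ matOpNorm (∑ i, A i (π i)))
      ≤ 2 * (d : ℝ) * Real.exp (-(t ^ 2) / (24 * (N : ℝ) * M ^ 2)) := by
  classical
  have hNR : (1:ℝ) ≤ (N:ℝ) := Nat.one_le_cast.2 hN
  have hM2 : (0:ℝ) < M ^ 2 := pow_pos hM 2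
  haveI : Nonempty (Fin d) := Fin.pos_iff_nonempty.1 hd
  have hne : (Finset.univ : Finset (Fin d)).Nonempty := Finset.univ_nonempty
  set hh : ∀ π : Equiv.Perm (Fin N), (Smat A π).IsHermitian := Smat_herm hsymm with hhdef
  set mfun : ℝ → ℝ := fun θ => ∑ π : Equiv.Perm (Fin N), trE (hh π) θ with hmfun
  set Dfun : ℝ → ℝ := fun θ => ∑ π : Equiv.Perm (Fin N), Tq (Smat A π) (hh π) θ with hDfun
  set F : ℝ → ℝ := fun θ => mfun θ + mfun (-θ) with hF
  set c : ℝ := 4 * (N:ℝ) * M ^ 2 with hc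
  have hc0 : 0 < c := by rw [hc]; nlinarith
  have hmnn : ∀ θ, 0 ≤ mfun θ := fun θ => Finset.sum_nonneg fun π _ => trE_nonneg _ _
  -- derivative of mfun
  have hmderiv : ∀ θ, HasDerivAt mfun (Dfun θ) θ := by
    intro θ
    have h : ∀ π ∈ (Finset.univ : Finset (Equiv.Perm (Fin N))),
        HasDerivAt (fun θ => trE (hh π) θ) (Tq (Smat A π) (hh π) θ) θ := by
      intro π _
      rw [Tq_self]
      have h2 : ∀ k ∈ (Finset.univ : Finset (Fin d)),
          HasDerivAt (fun θ : ℝ => Real.exp (θ * (hh π).eigenvalues k))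
            ((hh π).eigenvalues k * Real.exp (θ * (hh π).eigenvalues k)) θ := by
        intro k _
        have h1 : HasDerivAt (fun θ : ℝ => θ * (hh π).eigenvalues k)
            ((hh π).eigenvalues k) θ := by
          simpa using (hasDerivAt_id θ).mul_const ((hh π).eigenvalues k)
        simpa [mul_comm] using h1.exp
      exact HasDerivAt.fun_sum h2
    exact HasDerivAt.fun_sum h
  have hFderiv : ∀ θ, HasDerivAt F (Dfun θ - Dfun (-θ)) θ := by
    intro θ
    have h2 : HasDerivAt (fun θ : ℝ => mfun (-θ)) (Dfun (-θ) * (-1)) θ :=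
      HasDerivAt.comp θ (hmderiv (-θ)) (hasDerivAt_neg θ)
    have := (hmderiv θ).fun_add h2
    exact this.congr_deriv (by ring)
  set φ : ℝ → ℝ := fun θ => F θ * Real.exp (-(c/2) * θ ^ 2) with hφ
  have hφderiv : ∀ θ, HasDerivAt φ
      ((Dfun θ - Dfun (-θ) - c * θ * F θ) * Real.exp (-(c/2) * θ ^ 2)) θ := by
    intro θ
    have h1 : HasDerivAt (fun θ : ℝ => -(c/2) * θ ^ 2) (-(c/2) * (2 * θ)) θ := by
      have := (hasDerivAt_pow 2 θ).const_mul (-(c/2))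
      simpa [mul_comm] using this
    have h3 := (hFderiv θ).fun_mul h1.exp
    exact h3.congr_deriv (by ring)
  have hkey : ∀ θ : ℝ, |Dfun θ| ≤ c * |θ| * mfun θ := by
    intro θ
    have := key_bound hsymm hsum hM.le hbd hN θ
    calc |Dfun θ| ≤ 4 * N * M ^ 2 * |θ| * ∑ π : Equiv.Perm (Fin N),
          trE (Smat_herm hsymm π) θ := this
      _ = c * |θ| * mfun θ := by rw [hc, hmfun]
  have hφanti : AntitoneOn φ (Set.Ici (0:ℝ)) := by
    apply antitoneOn_of_deriv_nonpos (convex_Ici 0)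
    · exact fun θ _ => (hφderiv θ).continuousAt.continuousWithinAt
    · exact fun θ _ => (hφderiv θ).differentiableAt.differentiableWithinAt
    · intro θ hθ
      rw [interior_Ici] at hθ
      have hθ0 : 0 < θ := hθ
      rw [(hφderiv θ).deriv]
      apply mul_nonpos_of_nonpos_of_nonneg _ (Real.exp_pos _).le
      have k1 := hkey θ
      have k2 := hkey (-θ)
      rw [abs_of_pos hθ0] at k1
      rw [abs_neg, abs_of_pos hθ0] at k2
      have l1 : Dfun θ ≤ c * θ * mfun θ := (le_abs_self _).trans k1
      have l2 : -Dfun (-θ) ≤ c * θ * mfun (-θ) := (neg_le_abs _).trans k2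
      have hFe : c * θ * F θ = c * θ * mfun θ + c * θ * mfun (-θ) := by
        rw [hF]; ring
      linarith
  -- the optimal θ
  set θ0 : ℝ := t / (8 * (N:ℝ) * M ^ 2) with hθ0
  have hden : (0:ℝ) < 8 * (N:ℝ) * M ^ 2 := by nlinarith
  have hθ0nn : 0 ≤ θ0 := div_nonneg ht hden.le
  have hmono := hφanti Set.self_mem_Ici (Set.mem_Ici.2 hθ0nn) hθ0nn
  have hm0 : mfun 0 = (Nat.factorial N : ℝ) * (d:ℝ) := by
    simp only [hmfun]
    rw [Finset.sum_congr rfl fun π _ => trE_zero (hh π), Finset.sum_const, nsmul_eq_mul,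
      Finset.card_univ, Fintype.card_perm, Fintype.card_fin]
  have hF0 : F 0 = 2 * (d:ℝ) * (Nat.factorial N : ℝ) := by
    simp only [hF, neg_zero]
    rw [hm0]
    ring
  have hφ0 : φ 0 = 2 * (d:ℝ) * (Nat.factorial N : ℝ) := by
    rw [hφ]
    simp only [ne_eq, OfNat.ofNat_ne_zero, not_false_eq_true, zero_pow, mul_zero, neg_zero,
      Real.exp_zero, mul_one]
    exact hF0
  have hFθ0 : F θ0 ≤ 2 * (d:ℝ) * (Nat.factorial N : ℝ) * Real.exp ((c/2) * θ0 ^ 2) := by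
    have h1 : φ θ0 ≤ 2 * (d:ℝ) * (Nat.factorial N : ℝ) := by
      rw [← hφ0]; exact hmono
    rw [hφ] at h1
    have h2 : (0:ℝ) < Real.exp (-(c/2) * θ0 ^ 2) := Real.exp_pos _
    have h3 := mul_le_mul_of_nonneg_right h1 (Real.exp_pos ((c/2) * θ0 ^ 2)).le
    rw [mul_assoc, ← Real.exp_add] at h3
    simpa using h3
  -- pointwise event bound
  have hev : ∀ π : Equiv.Perm (Fin N),
      (if t ≤ matOpNorm (∑ i, A i (π i)) then (1:ℝ) else 0)
        ≤ Real.exp (-(θ0 * t)) * (trE (hh π) θ0 + trE (hh π) (-θ0)) := by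
    intro π
    split_ifs with hevt
    · have h1 : t ≤ Finset.univ.sup' hne fun k => |(hh π).eigenvalues k| :=
        le_trans hevt (matOpNorm_le_sup_abs_eigen hne (hh π))
      obtain ⟨k, -, hk⟩ := Finset.exists_mem_eq_sup' hne fun k => |(hh π).eigenvalues k|
      rw [hk] at h1
      set lam := (hh π).eigenvalues k with hlam
      have h2 : Real.exp (θ0 * t) ≤ Real.exp (θ0 * lam) + Real.exp (-θ0 * lam) := by
        have ha : θ0 * t ≤ θ0 * |lam| := mul_le_mul_of_nonneg_left h1 hθ0nn
        have hb : Real.exp (θ0 * |lam|) ≤ Real.exp (θ0 * lam) + Real.exp (-θ0 * lam) := by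
          rcases le_or_gt 0 lam with h | h
          · rw [abs_of_nonneg h]
            linarith [(Real.exp_pos (-θ0 * lam)).le]
          · rw [abs_of_neg h, show θ0 * -lam = -θ0 * lam by ring]
            linarith [(Real.exp_pos (θ0 * lam)).le]
        exact (Real.exp_le_exp.2 ha).trans hb
      have h3 : Real.exp (θ0 * lam) ≤ trE (hh π) θ0 :=
        Finset.single_le_sum (f := fun k => Real.exp (θ0 * (hh π).eigenvalues k))
          (fun k _ => (Real.exp_pos _).le) (Finset.mem_univ k)
      have h4 : Real.exp (-θ0 * lam) ≤ trE (hh π) (-θ0) :=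
        Finset.single_le_sum (f := fun k => Real.exp (-θ0 * (hh π).eigenvalues k))
          (fun k _ => (Real.exp_pos _).le) (Finset.mem_univ k)
      calc (1:ℝ) = Real.exp (-(θ0 * t)) * Real.exp (θ0 * t) := by
            rw [← Real.exp_add]; simp
        _ ≤ Real.exp (-(θ0 * t)) * (trE (hh π) θ0 + trE (hh π) (-θ0)) := by
            apply mul_le_mul_of_nonneg_left _ (Real.exp_pos _).le
            exact h2.trans (by linarith)
    · exact mul_nonneg (Real.exp_pos _).le
        (by linarith [trE_nonneg (hh π) θ0, trE_nonneg (hh π) (-θ0)])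
  -- sum the event bound
  have hsumev : (∑ π : Equiv.Perm (Fin N),
        if t ≤ matOpNorm (∑ i, A i (π i)) then (1:ℝ) else 0)
      ≤ Real.exp (-(θ0 * t)) * F θ0 := by
    calc (∑ π : Equiv.Perm (Fin N), if t ≤ matOpNorm (∑ i, A i (π i)) then (1:ℝ) else 0)
        ≤ ∑ π : Equiv.Perm (Fin N),
            Real.exp (-(θ0 * t)) * (trE (hh π) θ0 + trE (hh π) (-θ0)) :=
          Finset.sum_le_sum fun π _ => hev π
      _ = Real.exp (-(θ0 * t)) * F θ0 := by
          rw [← Finset.mul_sum, hF, hmfun, Finset.sum_add_distrib]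
  -- final arithmetic
  have hNfac : (0:ℝ) < (Nat.factorial N : ℝ) := Nat.cast_pos.2 (Nat.factorial_pos N)
  have harith : -(θ0 * t) + (c/2) * θ0 ^ 2 ≤ -(t ^ 2) / (24 * (N:ℝ) * M ^ 2) := by
    have hu : (0:ℝ) < (N:ℝ) * M ^ 2 := by nlinarith
    have hkey : -(θ0 * t) + (c/2) * θ0 ^ 2 = -3 * t ^ 2 / (32 * ((N:ℝ) * M ^ 2)) := by
      rw [hθ0, hc]
      field_simp
      ring
    rw [hkey, show (24 * (N:ℝ) * M ^ 2) = 24 * ((N:ℝ) * M ^ 2) by ring,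
      div_le_div_iff₀ (by positivity) (by positivity)]
    nlinarith [mul_nonneg (sq_nonneg t) hu.le]
  calc permProb N (fun π => t ≤ matOpNorm (∑ i, A i (π i)))
      = (∑ π : Equiv.Perm (Fin N),
          if t ≤ matOpNorm (∑ i, A i (π i)) then (1:ℝ) else 0) / (Nat.factorial N : ℝ) := rfl
    _ ≤ (Real.exp (-(θ0 * t)) * F θ0) / (Nat.factorial N : ℝ) := by
        gcongr
    _ ≤ (Real.exp (-(θ0 * t)) * (2 * (d:ℝ) * (Nat.factorial N : ℝ)
          * Real.exp ((c/2) * θ0 ^ 2))) / (Nat.factorial N : ℝ) := by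
        gcongr
    _ = 2 * (d:ℝ) * Real.exp (-(θ0 * t) + (c/2) * θ0 ^ 2) := by
        rw [Real.exp_add]
        field_simp
    _ ≤ 2 * (d:ℝ) * Real.exp (-(t ^ 2) / (24 * (N:ℝ) * M ^ 2)) := by
        have hd0 : (0:ℝ) ≤ 2 * (d:ℝ) := by positivity
        exact mul_le_mul_of_nonneg_left (Real.exp_le_exp.2 harith) hd0
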